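/- Let (m_n) be an increasing sequence in [1,∞). The following are equivalent: (i) B̲d_{l;(m_n)}(A) = B̲d_{u;(m_n)}(A) for every A ⊆ ℕ; (ii) B̲d_{l;(m_n)}(ℕ) = B̲d_{u;(m_n)}(ℕ); (iii) the limit lim_{n→∞} m_n/n exists in [0,∞]. -/

import Mathlib

open Filter Set
open scoped ENNReal symmDiff

/-- Number of elements of `A` in the integer interval `[a, b]`, as an extended nonneg real. -/
noncomputable def cnt (A : Set ℕ) (a b : ℕ) : ℝ≥0∞ :=
  (Nat.card (↥(A ∩ Set.Icc a b)) : ℝ≥0∞)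

/-- Lower `(m_n)`-density: `liminf_n |A ∩ [1, m_n]| / n`. -/
noncomputable def lowDens (m : ℕ → ℝ) (A : Set ℕ) : ℝ≥0∞ :=
  Filter.liminf (fun n : ℕ => cnt A 1 ⌊m n⌋₊ / (n : ℝ≥0∞)) Filter.atTop

/-- Upper `(m_n)`-density: `limsup_n |A ∩ [1, m_n]| / n`. -/
noncomputable def upDens (m : ℕ → ℝ) (A : Set ℕ) : ℝ≥0∞ :=
  Filter.limsup (fun n : ℕ => cnt A 1 ⌊m n⌋₊ / (n : ℝ≥0∞)) Filter.atTop

/-- Lower `l;(m_n)`-Banach density: `liminf_s liminf_n |A ∩ [n+1, n+m_s]| / s`. -/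
noncomputable def BdLL (m : ℕ → ℝ) (A : Set ℕ) : ℝ≥0∞ :=
  Filter.liminf (fun s : ℕ =>
    Filter.liminf (fun n : ℕ => cnt A (n + 1) (n + ⌊m s⌋₊) / (s : ℝ≥0∞)) Filter.atTop)
    Filter.atTop

/-- Lower `u;(m_n)`-Banach density: `limsup_s liminf_n |A ∩ [n+1, n+m_s]| / s`. -/
noncomputable def BdLU (m : ℕ → ℝ) (A : Set ℕ) : ℝ≥0∞ :=
  Filter.limsup (fun s : ℕ =>
    Filter.liminf (fun n : ℕ => cnt A (n + 1) (n + ⌊m s⌋₊) / (s : ℝ≥0∞)) Filter.atTop)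
    Filter.atTop

/-- Upper `l;(m_n)`-Banach density: `liminf_s limsup_n |A ∩ [n+1, n+m_s]| / s`. -/
noncomputable def BdUL (m : ℕ → ℝ) (A : Set ℕ) : ℝ≥0∞ :=
  Filter.liminf (fun s : ℕ =>
    Filter.limsup (fun n : ℕ => cnt A (n + 1) (n + ⌊m s⌋₊) / (s : ℝ≥0∞)) Filter.atTop)
    Filter.atTop

/-- Upper `u;(m_n)`-Banach density: `limsup_s limsup_n |A ∩ [n+1, n+m_s]| / s`. -/
noncomputable def BdUU (m : ℕ → ℝ) (A : Set ℕ) : ℝ≥0∞ :=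
  Filter.limsup (fun s : ℕ =>
    Filter.limsup (fun n : ℕ => cnt A (n + 1) (n + ⌊m s⌋₊) / (s : ℝ≥0∞)) Filter.atTop)
    Filter.atTop


namespace Aux18
open scoped Topology


lemma cnt_eq_ncard (A : Set ℕ) (a b : ℕ) : cnt A a b = ((A ∩ Set.Icc a b).ncard : ℝ≥0∞) := by
  rw [cnt, Nat.card_coe_set_eq]

lemma cnt_le (A : Set ℕ) (n M : ℕ) : cnt A (n+1) (n+M) ≤ (M : ℝ≥0∞) := by
  rw [cnt_eq_ncard, Nat.cast_le]
  calc (A ∩ Set.Icc (n+1) (n+M)).ncard ≤ (Set.Icc (n+1) (n+M)).ncard :=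
        Set.ncard_le_ncard Set.inter_subset_right (Set.finite_Icc _ _)
    _ = M := by rw [← Finset.coe_Icc, Set.ncard_coe_finset, Nat.card_Icc]; omega

lemma cnt_univ (n M : ℕ) : cnt Set.univ (n+1) (n+M) = (M : ℝ≥0∞) := by
  rw [cnt_eq_ncard, Set.univ_inter, ← Finset.coe_Icc, Set.ncard_coe_finset, Nat.card_Icc, show n+M+1-(n+1) = M by omega]

lemma cnt_mono (A : Set ℕ) (n : ℕ) {M K : ℕ} (h : M ≤ K) :
    cnt A (n+1) (n+M) ≤ cnt A (n+1) (n+K) := by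
  rw [cnt_eq_ncard, cnt_eq_ncard, Nat.cast_le]
  exact Set.ncard_le_ncard (Set.inter_subset_inter_right _ (Set.Icc_subset_Icc le_rfl (by omega)))
    ((Set.finite_Icc _ _).inter_of_right _)

lemma cnt_split (A : Set ℕ) (n M K : ℕ) :
    cnt A (n+1) (n+(M+K)) = cnt A (n+1) (n+M) + cnt A (n+M+1) (n+M+K) := by
  have disj : Disjoint (A ∩ Set.Icc (n+1) (n+M)) (A ∩ Set.Icc (n+M+1) (n+M+K)) :=
    Set.disjoint_of_subset Set.inter_subset_right Set.inter_subset_right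
      (by
        rw [Set.disjoint_left]
        intro x hx hx'
        simp only [Set.mem_Icc] at hx hx'
        omega)
  have hun : A ∩ Set.Icc (n+1) (n+(M+K))
      = (A ∩ Set.Icc (n+1) (n+M)) ∪ (A ∩ Set.Icc (n+M+1) (n+M+K)) := by
    rw [← Set.inter_union_distrib_left]
    congr 1
    ext x
    simp only [Set.mem_Icc, Set.mem_union]
    omega
  simp only [cnt_eq_ncard]
  rw [hun, Set.ncard_union_eq disj ((Set.finite_Icc _ _).inter_of_right _)
    ((Set.finite_Icc _ _).inter_of_right _), Nat.cast_add]



lemma liminf_add_liminf_le (u v : ℕ → ℝ≥0∞) :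
    liminf u atTop + liminf v atTop ≤ liminf (fun n => u n + v n) atTop := by
  have hu : Monotone (fun n : ℕ => ⨅ i ≥ n, u i) :=
    fun a b hab => le_iInf₂ fun i hi => iInf₂_le i (hab.trans hi)
  have hv : Monotone (fun n : ℕ => ⨅ i ≥ n, v i) :=
    fun a b hab => le_iInf₂ fun i hi => iInf₂_le i (hab.trans hi)
  rw [liminf_eq_iSup_iInf_of_nat, liminf_eq_iSup_iInf_of_nat, liminf_eq_iSup_iInf_of_nat,
    ENNReal.iSup_add_iSup_of_monotone hu hv]
  exact iSup_mono fun n => le_iInf₂ fun i hi =>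
    add_le_add (iInf₂_le i hi) (iInf₂_le i hi)

lemma liminf_const_mul' {u : ℕ → ℝ≥0∞} {a : ℝ≥0∞} (h0 : a ≠ 0) (htop : a ≠ ⊤) :
    liminf (fun n => a * u n) atTop = a * liminf u atTop := by
  apply le_antisymm
  · have h := ENNReal.le_liminf_mul (u := fun _ : ℕ => a⁻¹) (v := fun n => a * u n) (f := atTop)
    rw [liminf_const] at h
    have he : (fun n => ((fun _ : ℕ => a⁻¹) * fun n => a * u n) n) = u := funext fun n => by
      simp only [Pi.mul_apply, ← mul_assoc, ENNReal.inv_mul_cancel h0 htop, one_mul]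
    rw [show ((fun _ : ℕ => a⁻¹) * fun n => a * u n) = u from he] at h
    calc liminf (fun n => a * u n) atTop
        = a * (a⁻¹ * liminf (fun n => a * u n) atTop) := by
          rw [← mul_assoc, ENNReal.mul_inv_cancel h0 htop, one_mul]
      _ ≤ a * liminf u atTop := mul_le_mul_right h a
  · have h := ENNReal.le_liminf_mul (u := fun _ : ℕ => a) (v := u) (f := atTop)
    rwa [liminf_const] at h

lemma tendsto_const_div (c : ℝ≥0∞) (hc : c ≠ ⊤) :
    Tendsto (fun s : ℕ => c / (s : ℝ≥0∞)) atTop (𝓝 0) := by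
  simp only [div_eq_mul_inv]
  have h := ENNReal.Tendsto.const_mul (a := c) ENNReal.tendsto_inv_nat_nhds_zero (Or.inr hc)
  simpa using h

lemma liminf_add_le_of_small (u w : ℕ → ℝ≥0∞) (hw : Tendsto w atTop (𝓝 0)) :
    liminf (fun n => u n + w n) atTop ≤ liminf u atTop := by
  refine ENNReal.le_of_forall_pos_le_add fun ε hε _ => ?_
  have hev : ∀ᶠ n in atTop, w n < (ε : ℝ≥0∞) :=
    hw.eventually_lt_const (by exact_mod_cast hε)
  calc liminf (fun n => u n + w n) atTop
      ≤ liminf (fun n => u n + (ε : ℝ≥0∞)) atTop :=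
        liminf_le_liminf (hev.mono fun n hn => add_le_add_right hn.le _)
    _ = liminf u atTop + (ε : ℝ≥0∞) :=
        liminf_add_const atTop u _ (by isBoundedDefault) (by isBoundedDefault)

lemma limsup_add_le_of_small (u w : ℕ → ℝ≥0∞) (hw : Tendsto w atTop (𝓝 0)) :
    limsup (fun n => u n + w n) atTop ≤ limsup u atTop := by
  refine ENNReal.le_of_forall_pos_le_add fun ε hε _ => ?_
  have hev : ∀ᶠ n in atTop, w n < (ε : ℝ≥0∞) :=
    hw.eventually_lt_const (by exact_mod_cast hε)
  calc limsup (fun n => u n + w n) atTop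
      ≤ limsup (fun n => u n + (ε : ℝ≥0∞)) atTop :=
        limsup_le_limsup (hev.mono fun n hn => add_le_add_right hn.le _)
    _ = limsup u atTop + (ε : ℝ≥0∞) :=
        limsup_add_const atTop u _ (by isBoundedDefault) (by isBoundedDefault)


noncomputable def G (A : Set ℕ) (M : ℕ) : ℝ≥0∞ :=
  Filter.liminf (fun n : ℕ => cnt A (n+1) (n+M)) Filter.atTop

lemma G_le (A : Set ℕ) (M : ℕ) : G A M ≤ (M : ℝ≥0∞) := by
  calc G A M ≤ liminf (fun _ : ℕ => (M : ℝ≥0∞)) atTop :=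
        liminf_le_liminf (Eventually.of_forall fun n => cnt_le A n M)
    _ = M := liminf_const _

lemma G_ne_top (A : Set ℕ) (M : ℕ) : G A M ≠ ⊤ :=
  ((G_le A M).trans_lt (ENNReal.natCast_lt_top M)).ne

lemma G_mono (A : Set ℕ) {M K : ℕ} (h : M ≤ K) : G A M ≤ G A K :=
  liminf_le_liminf (Eventually.of_forall fun n => cnt_mono A n h)

lemma G_superadd (A : Set ℕ) (M K : ℕ) : G A M + G A K ≤ G A (M + K) := by
  have hsh : liminf (fun n : ℕ => cnt A (n+M+1) (n+M+K)) atTop = G A K :=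
    liminf_nat_add (fun n => cnt A (n+1) (n+K)) M
  calc G A M + G A K
      = liminf (fun n : ℕ => cnt A (n+1) (n+M)) atTop
        + liminf (fun n : ℕ => cnt A (n+M+1) (n+M+K)) atTop := by rw [hsh]; rfl
    _ ≤ liminf (fun n => cnt A (n+1) (n+M) + cnt A (n+M+1) (n+M+K)) atTop :=
        liminf_add_liminf_le _ _
    _ = G A (M+K) := liminf_congr (Eventually.of_forall fun n => (cnt_split A n M K).symm)

lemma G_nsmul (A : Set ℕ) (K q : ℕ) : (q : ℝ≥0∞) * G A K ≤ G A (q * K) := by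
  induction q with
  | zero => simp
  | succ q ih =>
      have h1 : ((q+1 : ℕ) : ℝ≥0∞) * G A K = (q : ℝ≥0∞) * G A K + G A K := by
        push_cast
        rw [add_mul, one_mul]
      rw [h1, show (q+1)*K = q*K + K from by ring]
      exact le_trans (add_le_add ih le_rfl) (G_superadd A (q*K) K)

noncomputable def al (A : Set ℕ) : ℝ≥0∞ := ⨆ k : ℕ, G A (k+1) / ((k+1 : ℕ) : ℝ≥0∞)

lemma al_ne_top (A : Set ℕ) : al A ≠ ⊤ := by
  have h : al A ≤ 1 := by
    refine iSup_le fun k => ?_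
    rw [ENNReal.div_le_iff_le_mul (Or.inl (by exact_mod_cast Nat.succ_ne_zero k))
      (Or.inl (ENNReal.natCast_ne_top _)), one_mul]
    exact G_le A (k+1)
  exact (h.trans_lt ENNReal.one_lt_top).ne

lemma G_le_al (A : Set ℕ) (M : ℕ) (hM : 1 ≤ M) : G A M ≤ al A * (M : ℝ≥0∞) := by
  obtain ⟨k, rfl⟩ : ∃ k, M = k + 1 := ⟨M - 1, by omega⟩
  have h : G A (k+1) / ((k+1 : ℕ) : ℝ≥0∞) ≤ al A :=
    le_iSup (fun k : ℕ => G A (k+1) / ((k+1 : ℕ) : ℝ≥0∞)) k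
  calc G A (k+1) = G A (k+1) / ((k+1 : ℕ) : ℝ≥0∞) * ((k+1 : ℕ) : ℝ≥0∞) :=
        (ENNReal.div_mul_cancel (by exact_mod_cast Nat.succ_ne_zero k)
          (ENNReal.natCast_ne_top _)).symm
    _ ≤ al A * ((k+1 : ℕ) : ℝ≥0∞) := mul_le_mul_left h _

lemma main_upper (A : Set ℕ) (M' : ℕ → ℕ) (hM' : ∀ s, 1 ≤ M' s) :
    limsup (fun s : ℕ => G A (M' s) / (s : ℝ≥0∞)) atTop
      ≤ al A * limsup (fun s : ℕ => ((M' s : ℝ≥0∞)) / (s : ℝ≥0∞)) atTop := by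
  rw [← ENNReal.limsup_const_mul_of_ne_top (al_ne_top A)]
  refine limsup_le_limsup (Eventually.of_forall fun s => ?_)
  calc G A (M' s) / (s : ℝ≥0∞) ≤ al A * (M' s : ℝ≥0∞) / (s : ℝ≥0∞) :=
        ENNReal.div_le_div_right (G_le_al A _ (hM' s)) _
    _ = al A * ((M' s : ℝ≥0∞) / (s : ℝ≥0∞)) := by rw [mul_div_assoc]

lemma main_lower (A : Set ℕ) (M' : ℕ → ℕ) :
    al A * liminf (fun s : ℕ => ((M' s : ℝ≥0∞)) / (s : ℝ≥0∞)) atTop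
      ≤ liminf (fun s : ℕ => G A (M' s) / (s : ℝ≥0∞)) atTop := by
  rw [al, ENNReal.iSup_mul]
  refine iSup_le fun k => ?_
  set K := k + 1 with hK
  set c := G A K with hc
  have hK0 : ((K : ℕ) : ℝ≥0∞) ≠ 0 := Nat.cast_ne_zero.mpr (by omega)
  have hKt : ((K : ℕ) : ℝ≥0∞) ≠ ⊤ := ENNReal.natCast_ne_top _
  have step1 : ∀ s : ℕ, c / (K : ℝ≥0∞) * ((M' s : ℝ≥0∞) / (s : ℝ≥0∞))
      ≤ G A (M' s) / (s : ℝ≥0∞) + c / (s : ℝ≥0∞) := by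
    intro s
    set M := M' s with hM
    set q := M / K with hq
    have hqc : (q : ℝ≥0∞) * c ≤ G A M :=
      le_trans (G_nsmul A K q) (G_mono A (Nat.div_mul_le_self M K))
    have hMle : (M : ℝ≥0∞) ≤ ((q : ℝ≥0∞) + 1) * (K : ℝ≥0∞) := by
      have h1 := Nat.div_add_mod M K
      rw [← hq] at h1
      have h2 : M % K < K := Nat.mod_lt M (by omega)
      have h3 : (q+1)*K = K*q + K := by ring
      have : (M : ℕ) ≤ (q + 1) * K := by omega
      calc (M : ℝ≥0∞) ≤ (((q+1) * K : ℕ) : ℝ≥0∞) := by exact_mod_cast this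
        _ = ((q : ℝ≥0∞) + 1) * (K : ℝ≥0∞) := by push_cast; ring
    have h2 : c / (K : ℝ≥0∞) * (M : ℝ≥0∞) ≤ (q : ℝ≥0∞) * c + c := by
      calc c / (K : ℝ≥0∞) * (M : ℝ≥0∞)
          ≤ c / (K : ℝ≥0∞) * (((q : ℝ≥0∞) + 1) * (K : ℝ≥0∞)) := mul_le_mul_right hMle _
        _ = ((q : ℝ≥0∞) + 1) * (c / (K : ℝ≥0∞) * (K : ℝ≥0∞)) := by ring
        _ = ((q : ℝ≥0∞) + 1) * c := by rw [ENNReal.div_mul_cancel hK0 hKt]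
        _ = (q : ℝ≥0∞) * c + c := by ring
    calc c / (K : ℝ≥0∞) * ((M : ℝ≥0∞) / (s : ℝ≥0∞))
        = c / (K : ℝ≥0∞) * (M : ℝ≥0∞) / (s : ℝ≥0∞) := by rw [mul_div_assoc]
      _ ≤ ((q : ℝ≥0∞) * c + c) / (s : ℝ≥0∞) := ENNReal.div_le_div_right h2 _
      _ = (q : ℝ≥0∞) * c / (s : ℝ≥0∞) + c / (s : ℝ≥0∞) := ENNReal.add_div
      _ ≤ G A M / (s : ℝ≥0∞) + c / (s : ℝ≥0∞) :=
          add_le_add_left (ENNReal.div_le_div_right hqc _) _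
  calc G A K / ((K : ℕ) : ℝ≥0∞) * liminf (fun s : ℕ => ((M' s : ℝ≥0∞)) / (s : ℝ≥0∞)) atTop
      ≤ liminf (fun s : ℕ => c / (K : ℝ≥0∞) * ((M' s : ℝ≥0∞) / (s : ℝ≥0∞))) atTop := by
        have h := ENNReal.le_liminf_mul (u := fun _ : ℕ => c / (K : ℝ≥0∞))
          (v := fun s : ℕ => ((M' s : ℝ≥0∞)) / (s : ℝ≥0∞)) (f := atTop)
        rwa [liminf_const] at h
    _ ≤ liminf (fun s : ℕ => G A (M' s) / (s : ℝ≥0∞) + c / (s : ℝ≥0∞)) atTop :=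
        liminf_le_liminf (Eventually.of_forall step1)
    _ ≤ liminf (fun s : ℕ => G A (M' s) / (s : ℝ≥0∞)) atTop :=
        liminf_add_le_of_small _ _ (tendsto_const_div c (G_ne_top A K))

lemma inner_eq (A : Set ℕ) (M : ℕ) {s : ℕ} (hs : 1 ≤ s) :
    liminf (fun n : ℕ => cnt A (n + 1) (n + M) / (s : ℝ≥0∞)) atTop = G A M / (s : ℝ≥0∞) := by
  have h0 : ((s : ℝ≥0∞))⁻¹ ≠ 0 := ENNReal.inv_ne_zero.mpr (ENNReal.natCast_ne_top s)
  have ht : ((s : ℝ≥0∞))⁻¹ ≠ ⊤ := ENNReal.inv_ne_top.mpr (Nat.cast_ne_zero.mpr (by omega))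
  simp only [ENNReal.div_eq_inv_mul]
  exact liminf_const_mul' h0 ht

lemma G_univ (M : ℕ) : G Set.univ M = (M : ℝ≥0∞) := by
  unfold G
  rw [liminf_congr (Eventually.of_forall fun n => cnt_univ n M), liminf_const]

lemma main_eq (A : Set ℕ) (M' : ℕ → ℕ) (hM' : ∀ s, 1 ≤ M' s)
    (h : liminf (fun s : ℕ => ((M' s : ℝ≥0∞)) / (s : ℝ≥0∞)) atTop
       = limsup (fun s : ℕ => ((M' s : ℝ≥0∞)) / (s : ℝ≥0∞)) atTop) :
    liminf (fun s : ℕ => G A (M' s) / (s : ℝ≥0∞)) atTop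
      = limsup (fun s : ℕ => G A (M' s) / (s : ℝ≥0∞)) atTop := by
  refine le_antisymm liminf_le_limsup ?_
  calc limsup (fun s : ℕ => G A (M' s) / (s : ℝ≥0∞)) atTop
      ≤ al A * limsup (fun s : ℕ => ((M' s : ℝ≥0∞)) / (s : ℝ≥0∞)) atTop :=
        main_upper A M' hM'
    _ = al A * liminf (fun s : ℕ => ((M' s : ℝ≥0∞)) / (s : ℝ≥0∞)) atTop := by rw [h]
    _ ≤ liminf (fun s : ℕ => G A (M' s) / (s : ℝ≥0∞)) atTop := main_lower A M'

lemma floor_iff (m : ℕ → ℝ) (h1 : ∀ n, 1 ≤ m n) :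
    (liminf (fun s : ℕ => ((⌊m s⌋₊ : ℝ≥0∞)) / (s : ℝ≥0∞)) atTop
      = limsup (fun s : ℕ => ((⌊m s⌋₊ : ℝ≥0∞)) / (s : ℝ≥0∞)) atTop)
    ↔ (liminf (fun n : ℕ => ENNReal.ofReal (m n / (n : ℝ))) atTop
      = limsup (fun n : ℕ => ENNReal.ofReal (m n / (n : ℝ))) atTop) := by
  set u : ℕ → ℝ≥0∞ := fun s => ((⌊m s⌋₊ : ℝ≥0∞)) / (s : ℝ≥0∞) with hu
  set v : ℕ → ℝ≥0∞ := fun n => ENNReal.ofReal (m n / (n : ℝ)) with hv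
  have hveq : ∀ s : ℕ, 1 ≤ s → v s = ENNReal.ofReal (m s) / (s : ℝ≥0∞) := by
    intro s hs
    have hs0 : (0 : ℝ) < (s : ℝ) := by exact_mod_cast hs
    rw [hv]
    simp only
    rw [ENNReal.ofReal_div_of_pos hs0, ENNReal.ofReal_natCast]
  have hle : ∀ᶠ s in atTop, u s ≤ v s := by
    filter_upwards [eventually_ge_atTop 1] with s hs
    rw [hveq s hs]
    refine ENNReal.div_le_div_right ?_ _
    rw [← ENNReal.ofReal_natCast]
    exact ENNReal.ofReal_le_ofReal (Nat.floor_le (le_trans zero_le_one (h1 s)))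
  have hge : ∀ᶠ s in atTop, v s ≤ u s + 1 / (s : ℝ≥0∞) := by
    filter_upwards [eventually_ge_atTop 1] with s hs
    rw [hveq s hs, show u s + 1 / (s : ℝ≥0∞) = ((⌊m s⌋₊ : ℝ≥0∞) + 1) / (s : ℝ≥0∞) from
      ENNReal.add_div.symm]
    refine ENNReal.div_le_div_right ?_ _
    calc ENNReal.ofReal (m s) ≤ ENNReal.ofReal ((⌊m s⌋₊ : ℝ) + 1) :=
          ENNReal.ofReal_le_ofReal (Nat.lt_floor_add_one (m s)).le
      _ = (⌊m s⌋₊ : ℝ≥0∞) + 1 := by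
          rw [ENNReal.ofReal_add (by positivity) zero_le_one, ENNReal.ofReal_natCast,
            ENNReal.ofReal_one]
  have h10 : Tendsto (fun s : ℕ => 1 / (s : ℝ≥0∞)) atTop (𝓝 0) :=
    tendsto_const_div 1 (by simp)
  have hlinf : liminf u atTop = liminf v atTop :=
    le_antisymm (liminf_le_liminf hle)
      (le_trans (liminf_le_liminf hge) (liminf_add_le_of_small u _ h10))
  have hlsup : limsup u atTop = limsup v atTop :=
    le_antisymm (limsup_le_limsup hle)
      (le_trans (limsup_le_limsup hge) (limsup_add_le_of_small u _ h10))
  rw [hlinf, hlsup]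

end Aux18

theorem stmt18 (m : ℕ → ℝ) (hm : Monotone m) (h1 : ∀ n, 1 ≤ m n) :
    ((∀ A : Set ℕ, BdLL m A = BdLU m A) ↔ BdLL m Set.univ = BdLU m Set.univ) ∧
      (BdLL m Set.univ = BdLU m Set.univ ↔
        Filter.liminf (fun n : ℕ => ENNReal.ofReal (m n / (n : ℝ))) Filter.atTop =
          Filter.limsup (fun n : ℕ => ENNReal.ofReal (m n / (n : ℝ))) Filter.atTop) := by
  have hM' : ∀ s, 1 ≤ ⌊m s⌋₊ := fun s => Nat.le_floor (by exact_mod_cast h1 s)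
  have hLL : ∀ A : Set ℕ,
      BdLL m A = liminf (fun s : ℕ => Aux18.G A ⌊m s⌋₊ / (s : ℝ≥0∞)) atTop := by
    intro A
    unfold BdLL
    refine liminf_congr ?_
    filter_upwards [eventually_ge_atTop 1] with s hs
    exact Aux18.inner_eq A _ hs
  have hLU : ∀ A : Set ℕ,
      BdLU m A = limsup (fun s : ℕ => Aux18.G A ⌊m s⌋₊ / (s : ℝ≥0∞)) atTop := by
    intro A
    unfold BdLU
    refine limsup_congr ?_
    filter_upwards [eventually_ge_atTop 1] with s hs
    exact Aux18.inner_eq A _ hs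
  have huL : BdLL m Set.univ = liminf (fun s : ℕ => ((⌊m s⌋₊ : ℝ≥0∞)) / (s : ℝ≥0∞)) atTop := by
    rw [hLL]
    exact liminf_congr (Eventually.of_forall fun s => by rw [Aux18.G_univ])
  have huU : BdLU m Set.univ = limsup (fun s : ℕ => ((⌊m s⌋₊ : ℝ≥0∞)) / (s : ℝ≥0∞)) atTop := by
    rw [hLU]
    exact limsup_congr (Eventually.of_forall fun s => by rw [Aux18.G_univ])
  constructor
  · constructor
    · intro h
      exact h _
    · intro h A
      rw [hLL, hLU]
      refine Aux18.main_eq A (fun s => ⌊m s⌋₊) hM' ?_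
      rw [huL, huU] at h
      exact h
  · rw [huL, huU]
    exact Aux18.floor_iff m h1
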